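/- Let β > 1. There exists a constant δ > 0 such that for every function of the form g(x) = 1 + Σ_{k=1}^∞ (a_k − b_k) x^k, where (a_1, a_2, …) and (b_1, b_2, …) are sequences in S_β, and every x ∈ [0, 1/β], if |g(x)| < δ then g'(x) < −δ. -/

import Mathlib

open Set MeasureTheory Filter Topology

noncomputable section

/-- The β-transformation `x ↦ βx mod 1`. -/
def fbeta (β : ℝ) (x : ℝ) : ℝ := Int.fract (β * x)

/-- The digit sequence `d(x, β)`, given by `d(x,β)_n = [β f_β^n(x)]`. -/
def bdigit (β x : ℝ) (n : ℕ) : ℕ := (⌊β * (fbeta β)^[n] x⌋).toNat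

/-- The β-shift `S_β`: the closure (product topology) of the set of digit sequences of
points of `[0,1)`. -/
def betaShift (β : ℝ) : Set (ℕ → ℕ) :=
  closure {d | ∃ x ∈ Set.Ico (0 : ℝ) 1, d = bdigit β x}

/-- `π_β ((i_k)) = ∑ i_k β^{-(k+1)}`. -/
def piBeta (β : ℝ) (d : ℕ → ℕ) : ℝ := ∑' k : ℕ, (d k : ℝ) / β ^ (k + 1)

/-- The finite word `w` occurs in the sequence `d` at position `m`. -/
def occursAt (w : List ℕ) (d : ℕ → ℕ) (m : ℕ) : Prop :=
  ∀ i < w.length, d (m + i) = w.getD i 0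

/-- The finite word `w` occurs somewhere in the sequence `d`. -/
def occursIn (w : List ℕ) (d : ℕ → ℕ) : Prop := ∃ m, occursAt w d m

/-- `w ∈ S_β^*`: the finite word `w` occurs in some sequence of `S_β`. -/
def wordIn (β : ℝ) (w : List ℕ) : Prop := ∃ d ∈ betaShift β, occursIn w d

/-- The finite word `w` occurs in some sequence of the set `S`. -/
def wordInSet (S : Set (ℕ → ℕ)) (w : List ℕ) : Prop := ∃ d ∈ S, occursIn w d

/-- The cylinder `[w]` in `S_β`. -/
def cylinder (β : ℝ) (w : List ℕ) : Set (ℕ → ℕ) :=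
  {d ∈ betaShift β | ∀ i < w.length, d i = w.getD i 0}

/-- A subshift of finite type inside `S_β`: the subset of `S_β` determined by a finite
set of forbidden words. -/
def IsSFTin (β : ℝ) (S : Set (ℕ → ℕ)) : Prop :=
  ∃ F : Finset (List ℕ), S = {d ∈ betaShift β | ∀ w ∈ F, ¬ occursIn w d}

/-- `S_β` is a subshift of finite type iff `d(1,β)` has only finitely many nonzero digits. -/
def betaShiftFiniteType (β : ℝ) : Prop := ∃ N, ∀ n ≥ N, bdigit β 1 n = 0

/-- The length (Lebesgue measure) of a set of reals. -/
def len (I : Set ℝ) : ℝ := (volume I).toReal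

/-- `I` is a (possibly degenerate) closed interval. -/
def IsClosedInterval (I : Set ℝ) : Prop := ∃ a b : ℝ, a ≤ b ∧ I = Set.Icc a b

/-- A legal move in Schmidt's game with ratio `ρ`: a closed subinterval `cur` of `prev`
with `|cur| ≥ ρ|prev|`. -/
def MoveLegal (ρ : ℝ) (prev cur : Set ℝ) : Prop :=
  IsClosedInterval cur ∧ cur ⊆ prev ∧ ρ * len prev ≤ len cur

/-- White has a winning strategy in Schmidt's `(α,γ)`-game on `[0,1]` with target set `E`:
there is a strategy (a function from the history of Black's moves to White's next move)
such that, for every sequence of moves of Black starting with a closed interval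
`B 0 ⊆ [0,1]`, White's moves are legal as long as Black's have been, and if Black always
moves legally then `⋂ k, W k ⊆ E`. -/
def WinsSchmidt (α γ : ℝ) (E : Set ℝ) : Prop :=
  ∃ strat : List (Set ℝ) → Set ℝ,
    ∀ B : ℕ → Set ℝ,
      (IsClosedInterval (B 0) ∧ B 0 ⊆ Set.Icc (0 : ℝ) 1) →
      (∀ n : ℕ,
        (∀ k < n, MoveLegal γ (strat (List.ofFn fun i : Fin (k + 1) => B i)) (B (k + 1))) →
        MoveLegal α (B n) (strat (List.ofFn fun i : Fin (n + 1) => B i))) ∧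
      ((∀ k : ℕ, MoveLegal γ (strat (List.ofFn fun i : Fin (k + 1) => B i)) (B (k + 1))) →
        (⋂ k : ℕ, strat (List.ofFn fun i : Fin (k + 1) => B i)) ⊆ E)

/-- `E` is `α`-winning: it is `(α,γ)`-winning for every `γ ∈ (0,1)`. -/
def AlphaWinning (α : ℝ) (E : Set ℝ) : Prop :=
  ∀ γ ∈ Set.Ioo (0 : ℝ) 1, WinsSchmidt α γ E

/-- A similarity transformation of `ℝ`. -/
def IsSimilarityMap (f : ℝ → ℝ) : Prop := ∃ a b : ℝ, a ≠ 0 ∧ ∀ x, f x = a * x + b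

/-- Falconer's class `𝒢^s`: `G_δ` sets `F` with `dim_H (⋂ i, f_i(F)) ≥ s` for every
sequence of similarity transformations `(f_i)`. -/
def FalconerClass (s : ℝ) (F : Set ℝ) : Prop :=
  IsGδ F ∧ ∀ f : ℕ → ℝ → ℝ, (∀ i, IsSimilarityMap (f i)) →
    ENNReal.ofReal s ≤ dimH (⋂ i, f i '' F)

/-- The suffix of `u` of length `m+1` coincides with the first `m+1` digits of `d(1,β)`. -/
def tailMatch (β : ℝ) (u : List ℕ) (m : ℕ) : Prop :=
  m < u.length ∧ ∀ t ≤ m, u.getD (u.length - 1 - m + t) 0 = bdigit β 1 t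
namespace ImpTransAux

lemma iter_mem_Ico {β x : ℝ} (hx : x ∈ Set.Ico (0:ℝ) 1) (n : ℕ) :
    (fbeta β)^[n] x ∈ Set.Ico (0:ℝ) 1 := by
  induction n with
  | zero => simpa using hx
  | succ n ih =>
      rw [Function.iterate_succ_apply']
      exact ⟨Int.fract_nonneg _, Int.fract_lt_one _⟩

lemma iter_nonneg {β x : ℝ} (hx : 0 ≤ x) (n : ℕ) : 0 ≤ (fbeta β)^[n] x := by
  cases n with
  | zero => simpa using hx
  | succ n => rw [Function.iterate_succ_apply']; exact Int.fract_nonneg _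

lemma bdigit_cast {β x : ℝ} (hβ : 1 < β) (hx : 0 ≤ x) (k : ℕ) :
    ((bdigit β x k : ℕ) : ℝ) = ((⌊β * (fbeta β)^[k] x⌋ : ℤ) : ℝ) := by
  have hβ0 : (0:ℝ) < β := one_pos.trans hβ
  have hnn : (0:ℤ) ≤ ⌊β * (fbeta β)^[k] x⌋ :=
    Int.floor_nonneg.mpr (mul_nonneg hβ0.le (iter_nonneg hx k))
  unfold bdigit
  exact_mod_cast congrArg (fun z : ℤ => (z : ℝ)) (Int.toNat_of_nonneg hnn)

lemma bdigit_lt {β x : ℝ} (hβ : 1 < β) (hx : x ∈ Set.Ico (0:ℝ) 1) (k : ℕ) :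
    (bdigit β x k : ℝ) < β := by
  obtain ⟨ht0, ht1⟩ := iter_mem_Ico (β := β) hx k
  have hβ0 : (0:ℝ) < β := one_pos.trans hβ
  rw [bdigit_cast hβ hx.1 k]
  calc ((⌊β * (fbeta β)^[k] x⌋ : ℤ) : ℝ) ≤ β * (fbeta β)^[k] x := Int.floor_le _
    _ < β := by nlinarith

lemma agree {β : ℝ} {a : ℕ → ℕ} (ha : a ∈ betaShift β) (n : ℕ) :
    ∃ x ∈ Set.Ico (0:ℝ) 1, ∀ k < n, a k = bdigit β x k := by
  have hU : IsOpen {d : ℕ → ℕ | ∀ k < n, d k = a k} := by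
    have he : {d : ℕ → ℕ | ∀ k < n, d k = a k} =
        ⋂ k ∈ Finset.range n, (fun d : ℕ → ℕ => d k) ⁻¹' {a k} := by
      ext d; simp [Finset.mem_range]
    rw [he]
    exact isOpen_biInter_finset fun k _ =>
      (continuous_apply k).isOpen_preimage _ (isOpen_discrete _)
  have hmem : a ∈ {d : ℕ → ℕ | ∀ k < n, d k = a k} := fun k _ => rfl
  obtain ⟨d, hd1, x, hx, rfl⟩ := mem_closure_iff.mp ha _ hU hmem
  exact ⟨x, hx, fun k hk => (hd1 k hk).symm⟩

lemma shift_digit_le {β : ℝ} (hβ : 1 < β) {a : ℕ → ℕ} (ha : a ∈ betaShift β) (k : ℕ) :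
    (a k : ℝ) ≤ β := by
  obtain ⟨x, hx, h⟩ := agree ha (k+1)
  rw [h k (Nat.lt_succ_self k)]
  exact (bdigit_lt hβ hx k).le

lemma partial_sum_eq {β x : ℝ} (hβ : 1 < β) (hx0 : 0 ≤ x) (n : ℕ) :
    ∑ k ∈ Finset.range n, (bdigit β x k : ℝ) / β ^ (k+1)
      = x - (fbeta β)^[n] x / β ^ n := by
  have hβ0 : (0:ℝ) < β := one_pos.trans hβ
  induction n with
  | zero => simp
  | succ n ih =>
    rw [Finset.sum_range_succ, ih, bdigit_cast hβ hx0 n]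
    have hfr : (fbeta β)^[n+1] x
        = β * (fbeta β)^[n] x - ((⌊β * (fbeta β)^[n] x⌋ : ℤ) : ℝ) := by
      rw [Function.iterate_succ_apply', fbeta, Int.fract]
    rw [hfr]
    have h1 : (β:ℝ) ^ n ≠ 0 := by positivity
    have h2 : (β:ℝ) ^ (n+1) ≠ 0 := by positivity
    field_simp
    ring

lemma pi_summable {β : ℝ} (hβ : 1 < β) {a : ℕ → ℕ} (ha : a ∈ betaShift β) :
    Summable (fun k => (a k : ℝ) / β ^ (k+1)) := by
  have hβ0 : (0:ℝ) < β := one_pos.trans hβ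
  have hy1 : 1/β < 1 := by rw [div_lt_one hβ0]; exact hβ
  refine Summable.of_nonneg_of_le (fun k => by positivity) (fun k => ?_)
    (summable_geometric_of_lt_one (by positivity) hy1)
  have h1 : (a k : ℝ) ≤ β := shift_digit_le hβ ha k
  have h2 : (a k : ℝ)/β^(k+1) ≤ β/β^(k+1) := by gcongr
  have h3 : β / β^(k+1) = (1/β)^k := by
    rw [div_pow, one_pow, pow_succ]
    field_simp
  rw [← h3]
  exact h2

lemma piBeta_le_one {β : ℝ} (hβ : 1 < β) {a : ℕ → ℕ} (ha : a ∈ betaShift β) :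
    ∑' k, (a k : ℝ) / β ^ (k+1) ≤ 1 := by
  have hβ0 : (0:ℝ) < β := one_pos.trans hβ
  apply Real.tsum_le_of_sum_range_le (fun k => by positivity)
  intro n
  obtain ⟨x, hx, h⟩ := agree ha n
  have he : ∑ k ∈ Finset.range n, (a k : ℝ) / β^(k+1)
      = ∑ k ∈ Finset.range n, (bdigit β x k : ℝ) / β^(k+1) :=
    Finset.sum_congr rfl fun k hk => by rw [h k (Finset.mem_range.mp hk)]
  rw [he, partial_sum_eq hβ hx.1 n]
  have h1 : 0 ≤ (fbeta β)^[n] x / β ^ n := by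
    have := iter_nonneg (β := β) hx.1 n; positivity
  linarith [hx.2]

end ImpTransAux

set_option maxHeartbeats 1600000 in
open ImpTransAux in
/-- improved transversality lemma: for `β > 1` there is `δ > 0` such
that for every `g(x) = 1 + ∑ (a_k - b_k) x^k` with `a, b ∈ S_β` and every
`x ∈ [0, 1/β]`, if `|g(x)| < δ` then `g'(x) < -δ`. -/
theorem improved_transversality (β : ℝ) (hβ : 1 < β) :
    ∃ δ > 0, ∀ a b : ℕ → ℕ, a ∈ betaShift β → b ∈ betaShift β →
      ∀ x ∈ Set.Icc (0 : ℝ) (1 / β),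
        |1 + ∑' k : ℕ, ((a k : ℝ) - (b k : ℝ)) * x ^ (k + 1)| < δ →
          deriv (fun t : ℝ => 1 + ∑' k : ℕ, ((a k : ℝ) - (b k : ℝ)) * t ^ (k + 1)) x < -δ := by
  classical
  have hβ0 : (0:ℝ) < β := one_pos.trans hβ
  set y : ℝ := 1 / β with hy
  have hy0 : 0 < y := by positivity
  have hy1 : y < 1 := by rw [hy, div_lt_one hβ0]; exact hβ
  -- weight sequence and choice of K
  set w : ℕ → ℝ := fun k => (k : ℝ) * β * y ^ (k+1) with hw
  have hw_nonneg : ∀ k, 0 ≤ w k := fun k => by rw [hw]; positivity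
  have hw_sum : Summable w := by
    have h1 : Summable (fun k : ℕ => (k:ℝ) * y ^ k) := by
      have := summable_pow_mul_geometric_of_norm_lt_one (R := ℝ) 1
        (r := y) (by rw [Real.norm_eq_abs, abs_of_pos hy0]; exact hy1)
      simpa using this
    refine (h1.mul_left (β * y)).congr fun k => ?_
    rw [hw]; ring
  obtain ⟨K, hK⟩ : ∃ K, ∑' l, w (l + K) < 1/8 := by
    have ht := tendsto_sum_nat_add w
    have := (tendsto_order.1 ht).2 (1/8) (by norm_num)
    exact this.exists
  set δ : ℝ := min (1/8) ((1/(2*β))^K / 2) with hδ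
  have hδpos : 0 < δ := lt_min (by norm_num) (by positivity)
  refine ⟨δ, hδpos, ?_⟩
  intro a b ha hb x hx hg
  obtain ⟨hx0, hxy⟩ := hx
  have haβ : ∀ k, (a k : ℝ) ≤ β := shift_digit_le hβ ha
  have hbβ : ∀ k, (b k : ℝ) ≤ β := shift_digit_le hβ hb
  have hx1 : x < 1 := lt_of_le_of_lt hxy hy1
  -- summability facts
  have geo : Summable (fun k : ℕ => β * ((1/β) ^ k)) :=
    (summable_geometric_of_lt_one (by positivity) hy1).mul_left β
  have hterm : ∀ (c : ℕ → ℕ) (hc : ∀ k, (c k : ℝ) ≤ β) (k : ℕ),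
      (c k : ℝ) * x ^ (k+1) ≤ β * ((1/β) ^ k) := by
    intro c hc k
    have h1 : x ^ (k+1) ≤ (1/β) ^ (k+1) := pow_le_pow_left₀ hx0 hxy _
    have h2 : (c k : ℝ) * x ^ (k+1) ≤ β * (1/β) ^ (k+1) :=
      mul_le_mul (hc k) h1 (by positivity) hβ0.le
    have h3 : β * (1/β:ℝ) ^ (k+1) ≤ β * (1/β) ^ k := by
      have : ((1/β:ℝ)) ^ (k+1) ≤ (1/β) ^ k :=
        pow_le_pow_of_le_one (by positivity) (by rw [div_le_one hβ0]; exact hβ.le)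
          (Nat.le_succ k)
      exact mul_le_mul_of_nonneg_left this hβ0.le
    linarith
  have sA : Summable (fun k => (a k : ℝ) * x ^ (k+1)) :=
    Summable.of_nonneg_of_le (fun k => by positivity) (hterm a haβ) geo
  have sB : Summable (fun k => (b k : ℝ) * x ^ (k+1)) :=
    Summable.of_nonneg_of_le (fun k => by positivity) (hterm b hbβ) geo
  have hkterm : ∀ (c : ℕ → ℕ) (hc : ∀ k, (c k : ℝ) ≤ β) (k : ℕ),
      (k:ℝ) * (c k : ℝ) * x ^ (k+1) ≤ w k := by
    intro c hc k
    rw [hw]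
    have h1 : x ^ (k+1) ≤ y ^ (k+1) := pow_le_pow_left₀ hx0 hxy _
    have h2 : (c k : ℝ) * x ^ (k+1) ≤ β * y ^ (k+1) :=
      mul_le_mul (hc k) h1 (by positivity) hβ0.le
    calc (k:ℝ) * (c k : ℝ) * x ^ (k+1) = (k:ℝ) * ((c k : ℝ) * x ^ (k+1)) := by ring
      _ ≤ (k:ℝ) * (β * y ^ (k+1)) := mul_le_mul_of_nonneg_left h2 (Nat.cast_nonneg k)
      _ = (k:ℝ) * β * y ^ (k+1) := by ring
  have sKA : Summable (fun k : ℕ => (k:ℝ) * (a k : ℝ) * x ^ (k+1)) :=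
    Summable.of_nonneg_of_le (fun k => by positivity) (hkterm a haβ) hw_sum
  have sKB : Summable (fun k : ℕ => (k:ℝ) * (b k : ℝ) * x ^ (k+1)) :=
    Summable.of_nonneg_of_le (fun k => by positivity) (hkterm b hbβ) hw_sum
  have sC : Summable (fun k => ((a k:ℝ) - (b k:ℝ)) * x^(k+1)) :=
    (sA.sub sB).congr fun k => by ring
  -- bounds on B
  have sπb : Summable (fun k => (b k : ℝ) / β ^ (k+1)) := pi_summable hβ hb
  have hπb : ∑' k, (b k:ℝ)/β^(k+1) ≤ 1 := piBeta_le_one hβ hb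
  have hA0 : 0 ≤ ∑' k, (a k:ℝ) * x^(k+1) := tsum_nonneg fun k => by positivity
  have hBle : ∑' k, (b k:ℝ) * x^(k+1) ≤ β * x := by
    have h1 : ∀ k, (b k:ℝ) * x^(k+1) ≤ (β * x) * ((b k:ℝ)/β^(k+1)) := by
      intro k
      have hxk : x ^ (k+1) ≤ x * (1/β)^k := by
        rw [pow_succ']
        exact mul_le_mul_of_nonneg_left (pow_le_pow_left₀ hx0 hxy k) hx0
      have h2 : (b k:ℝ) * x^(k+1) ≤ (b k:ℝ) * (x * (1/β)^k) :=
        mul_le_mul_of_nonneg_left hxk (Nat.cast_nonneg _)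
      have h3 : (b k:ℝ) * (x * (1/β)^k) = (β * x) * ((b k:ℝ)/β^(k+1)) := by
        rw [div_pow, one_pow, pow_succ]
        field_simp
      linarith
    calc ∑' k, (b k:ℝ) * x^(k+1) ≤ ∑' k, (β*x) * ((b k:ℝ)/β^(k+1)) :=
          Summable.tsum_le_tsum h1 sB (sπb.mul_left _)
      _ = (β*x) * ∑' k, (b k:ℝ)/β^(k+1) := tsum_mul_left
      _ ≤ (β*x) * 1 := mul_le_mul_of_nonneg_left hπb (by positivity)
      _ = β*x := mul_one _
  have hβx1 : β * x ≤ 1 := by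
    have := (le_div_iff₀ hβ0).mp hxy
    linarith
  -- consequences of |g x| < δ
  have hS : ∑' k, ((a k:ℝ)-(b k:ℝ))*x^(k+1)
      = (∑' k, (a k:ℝ) * x^(k+1)) - ∑' k, (b k:ℝ) * x^(k+1) := by
    rw [← Summable.tsum_sub sA sB]
    exact tsum_congr fun k => by ring
  rw [abs_lt] at hg
  obtain ⟨hg1, hg2⟩ := hg
  rw [hS] at hg2
  have hδ8 : δ ≤ 1/8 := min_le_left _ _
  have hδK : δ ≤ (1/(2*β))^K / 2 := min_le_right _ _
  have hxlb : 1/(2*β) ≤ x := by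
    rw [div_le_iff₀ (by positivity)]
    nlinarith [hBle, hA0]
  have hx0' : (0:ℝ) < x := lt_of_lt_of_le (by positivity) hxlb
  have hAδ : ∑' k, (a k:ℝ) * x^(k+1) < δ := by
    nlinarith [hBle, hβx1]
  -- a-digits vanish below K
  have hza : ∀ k, k < K → a k = 0 := by
    intro k hkK
    by_contra hne
    have h1 : (1:ℝ) ≤ (a k : ℝ) := by exact_mod_cast Nat.one_le_iff_ne_zero.mpr hne
    have h2 : (1/(2*β))^(k+1) ≤ x^(k+1) := pow_le_pow_left₀ (by positivity) hxlb _
    have h3 : ((1:ℝ)/(2*β))^K ≤ (1/(2*β))^(k+1) := by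
      apply pow_le_pow_of_le_one (by positivity) ?_ (Nat.succ_le_of_lt hkK)
      rw [div_le_one (by positivity)]
      linarith
    have h4 : (a k : ℝ) * x^(k+1) ≤ ∑' k, (a k:ℝ) * x^(k+1) :=
      Summable.le_tsum sA k (fun i _ => by positivity)
    have h5 : x^(k+1) ≤ (a k:ℝ) * x^(k+1) :=
      le_mul_of_one_le_left (by positivity) h1
    have h6 : (0:ℝ) < (1/(2*β))^K := by positivity
    linarith
  -- tail bound for the ka_k-sum
  set w' : ℕ → ℝ := fun k => if k < K then 0 else w k with hw'
  have hw'_le : ∀ k, w' k ≤ w k := by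
    intro k; rw [hw']; dsimp only
    split
    · exact hw_nonneg k
    · exact le_refl _
  have hw'_nonneg : ∀ k, 0 ≤ w' k := by
    intro k; rw [hw']; dsimp only
    split
    · exact le_refl _
    · exact hw_nonneg k
  have hw'_sum : Summable w' := Summable.of_nonneg_of_le hw'_nonneg hw'_le hw_sum
  have hTkA : ∑' k : ℕ, (k:ℝ) * (a k:ℝ) * x^(k+1) ≤ 1/8 := by
    have h1 : ∀ k : ℕ, (k:ℝ)*(a k:ℝ)*x^(k+1) ≤ w' k := by
      intro k; rw [hw']; dsimp only
      split
      · next h => rw [hza k h]; simp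
      · next h => exact hkterm a haβ k
    have h2 : ∑' k : ℕ, (k:ℝ)*(a k:ℝ)*x^(k+1) ≤ ∑' k, w' k :=
      Summable.tsum_le_tsum h1 sKA hw'_sum
    have h3 : ∑' k, w' k = ∑' l, w (l + K) := by
      rw [← Summable.sum_add_tsum_nat_add K hw'_sum]
      have hz : ∑ i ∈ Finset.range K, w' i = 0 :=
        Finset.sum_eq_zero fun i hi => by
          rw [hw']; dsimp only; rw [if_pos (Finset.mem_range.mp hi)]
      rw [hz, zero_add]
      refine tsum_congr fun l => ?_
      rw [hw']; dsimp only; rw [if_neg (by omega)]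
    rw [h3] at h2
    linarith
  -- the derivative
  set r : ℝ := (y + 1)/2 with hr
  have hyr : y < r := by rw [hr]; linarith
  have hr1 : r < 1 := by rw [hr]; linarith
  have hr0 : (0:ℝ) < r := by rw [hr]; linarith
  have hu_sum : Summable (fun k : ℕ => β * (((k:ℝ)+1) * r^k)) := by
    have hA1 : Summable (fun k:ℕ => (k:ℝ) * r^k) := by
      have := summable_pow_mul_geometric_of_norm_lt_one (R := ℝ) 1
        (r := r) (by rw [Real.norm_eq_abs, abs_of_pos hr0]; exact hr1)
      simpa using this
    have hA2 : Summable (fun k:ℕ => (r:ℝ)^k) := summable_geometric_of_lt_one hr0.le hr1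
    exact ((hA1.add hA2).mul_left β).congr fun k => by ring
  have hder : HasDerivAt (fun t : ℝ => ∑' k : ℕ, ((a k:ℝ)-(b k:ℝ)) * t^(k+1))
      (∑' k : ℕ, ((a k:ℝ)-(b k:ℝ)) * ((((k:ℕ)+1 : ℕ):ℝ) * x^k)) x := by
    refine hasDerivAt_tsum_of_isPreconnected (u := fun k : ℕ => β * (((k:ℝ)+1) * r^k))
      (g := fun (k : ℕ) (t : ℝ) => ((a k:ℝ)-(b k:ℝ)) * t^(k+1))
      (g' := fun (k : ℕ) (t : ℝ) => ((a k:ℝ)-(b k:ℝ)) * ((((k:ℕ)+1 : ℕ):ℝ) * t^k))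
      (y₀ := 0) hu_sum (isOpen_Ioo (a := -r) (b := r))
      isPreconnected_Ioo (fun k t ht => ?_) (fun k t ht => ?_) ?_ ?_ ?_
    · have h := (hasDerivAt_pow (k+1) t).const_mul ((a k:ℝ)-(b k:ℝ))
      simpa using h
    · rw [Real.norm_eq_abs, abs_mul]
      have hck : |(a k:ℝ)-(b k:ℝ)| ≤ β := by
        rw [abs_sub_le_iff]
        constructor
        · have : (0:ℝ) ≤ (b k : ℝ) := Nat.cast_nonneg _
          linarith [haβ k]
        · have : (0:ℝ) ≤ (a k : ℝ) := Nat.cast_nonneg _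
          linarith [hbβ k]
      have htr : |t| ≤ r := le_of_lt (abs_lt.mpr ⟨ht.1, ht.2⟩)
      have h2 : |(((k:ℕ)+1 : ℕ):ℝ) * t^k| ≤ ((k:ℝ)+1) * r^k := by
        rw [abs_mul, abs_pow]
        push_cast
        exact mul_le_mul (le_of_eq (abs_of_nonneg (by positivity)))
          (pow_le_pow_left₀ (abs_nonneg t) htr k) (by positivity) (by positivity)
      exact mul_le_mul hck h2 (abs_nonneg _) hβ0.le
    · exact ⟨by linarith, hr0⟩
    · refine summable_zero.congr fun k => ?_
      simp
    · exact ⟨by linarith, lt_of_le_of_lt hxy hyr⟩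
  have hderiv : deriv (fun t : ℝ => 1 + ∑' k : ℕ, ((a k : ℝ) - (b k : ℝ)) * t ^ (k + 1)) x
      = ∑' k : ℕ, ((a k:ℝ)-(b k:ℝ)) * ((((k:ℕ)+1 : ℕ):ℝ) * x^k) :=
    (hder.const_add 1).deriv
  rw [hderiv]
  set D : ℝ := ∑' k : ℕ, ((a k:ℝ)-(b k:ℝ)) * ((((k:ℕ)+1 : ℕ):ℝ) * x^k) with hDdef
  -- final estimate
  have sD' : Summable (fun k : ℕ => (k:ℝ)*((a k:ℝ)-(b k:ℝ))*x^(k+1)) :=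
    (sKA.sub sKB).congr fun k => by ring
  have hxD : x * D
      = (∑' k : ℕ, (k:ℝ)*((a k:ℝ)-(b k:ℝ))*x^(k+1))
        + ∑' k, ((a k:ℝ)-(b k:ℝ))*x^(k+1) := by
    rw [hDdef, ← tsum_mul_left, ← Summable.tsum_add sD' sC]
    refine tsum_congr fun k => ?_
    push_cast
    ring
  have hTk : ∑' k : ℕ, (k:ℝ)*((a k:ℝ)-(b k:ℝ))*x^(k+1) ≤ 1/8 := by
    have he : ∑' k : ℕ, (k:ℝ)*((a k:ℝ)-(b k:ℝ))*x^(k+1)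
        = (∑' k : ℕ, (k:ℝ)*(a k:ℝ)*x^(k+1)) - ∑' k : ℕ, (k:ℝ)*(b k:ℝ)*x^(k+1) := by
      rw [← Summable.tsum_sub sKA sKB]
      exact tsum_congr fun k => by ring
    have hTkB0 : 0 ≤ ∑' k : ℕ, (k:ℝ)*(b k:ℝ)*x^(k+1) := tsum_nonneg fun k => by positivity
    rw [he]
    linarith [hTkA]
  have hxDlt : x * D < -3/4 := by
    rw [hxD, hS]
    linarith [hTk, hg2, hδ8]
  by_contra hcon
  push_neg at hcon
  nlinarith [mul_nonneg (by linarith : (0:ℝ) ≤ D + δ) hx0'.le,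
    mul_nonneg (by linarith : (0:ℝ) ≤ 1 - x) hδpos.le]
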